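/- Let W : ℕ → ℝ be nonnegative, nondecreasing, concave with W(0) = 0, and with curvature at most c ∈ (0,1], i.e., W(n) - W(n-1) ≥ (1-c)·W(1). Define η_1 = (2W(1) - W(2))/c, η_k = (2W(k) - W(k-1) - W(k+1))/c for k = 2,...,n-1, and η_n = W(1) - Σ_{k=1}^{n-1} η_k. Then all coefficients η_1, ..., η_n are nonnegative. -/

import Mathlib

theorem coefficients_nonneg
    (W : ℕ → ℝ) (c : ℝ) (n : ℕ)
    (hc0 : 0 < c) (hc1 : c ≤ 1) (hn : 2 ≤ n)
    (h0 : W 0 = 0)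
    (hmono : ∀ x : ℕ, W x ≤ W (x + 1))
    (hconc : ∀ x : ℕ, 1 ≤ x → W (x + 1) - W x ≤ W x - W (x - 1))
    (hpos : ∀ x : ℕ, 1 ≤ x → 0 < W x)
    (hcurv : W n - W (n - 1) ≥ (1 - c) * W 1)
    (η : ℕ → ℝ)
    (hη1 : η 1 = (2 * W 1 - W 2) / c)
    (hηk : ∀ k : ℕ, 2 ≤ k → k ≤ n - 1 → η k = (2 * W k - W (k - 1) - W (k + 1)) / c)
    (hηn : η n = W 1 - ∑ k ∈ Finset.Icc 1 (n - 1), η k) :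
    ∀ k ∈ Finset.Icc 1 n, 0 ≤ η k := by
  have hd : ∀ j ∈ Finset.Icc 1 (n - 1),
      η j = (W j - W (j - 1)) / c - (W (j + 1) - W j) / c := by
    intro j hj
    simp only [Finset.mem_Icc] at hj
    rcases eq_or_lt_of_le hj.1 with h1 | h1
    · rw [← h1, hη1]
      norm_num [h0]
      ring
    · rw [hηk j h1 hj.2]
      ring
  have hsum : ∑ k ∈ Finset.Icc 1 (n - 1), η k
      = W 1 / c - (W n - W (n - 1)) / c := by
    have hIcc : Finset.Icc 1 (n - 1) = Finset.Ico 1 n := by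
      ext x; simp only [Finset.mem_Icc, Finset.mem_Ico]; omega
    rw [Finset.sum_congr rfl hd, hIcc, Finset.sum_Ico_eq_sum_range]
    have key : ∑ i ∈ Finset.range (n - 1),
        ((W (1 + i) - W (1 + i - 1)) / c - (W (1 + i + 1) - W (1 + i)) / c)
        = ∑ i ∈ Finset.range (n - 1),
          ((W (i + 1) - W i) / c - (W (i + 1 + 1) - W (i + 1)) / c) := by
      apply Finset.sum_congr rfl
      intro i _
      have e1 : 1 + i = i + 1 := by omega
      rw [e1]
      have e2 : i + 1 - 1 = i := by omega
      rw [e2]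
    rw [key, Finset.sum_range_sub' (fun i => (W (i + 1) - W i) / c)]
    have h1 : n - 1 + 1 = n := by omega
    rw [h1, h0]
    norm_num
  intro k hk
  simp only [Finset.mem_Icc] at hk
  rcases lt_or_eq_of_le hk.2 with hlt | heq
  · have hk' : k ≤ n - 1 := by omega
    rw [hd k (Finset.mem_Icc.mpr ⟨hk.1, hk'⟩)]
    have hc := hconc k hk.1
    have : (W (k + 1) - W k) / c ≤ (W k - W (k - 1)) / c := by gcongr
    linarith
  · rw [heq, hηn, hsum]
    have hnum : 0 ≤ c * W 1 - W 1 + (W n - W (n - 1)) := by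
      have := hcurv
      nlinarith
    have : 0 ≤ (c * W 1 - W 1 + (W n - W (n - 1))) / c := div_nonneg hnum hc0.le
    have hfe : W 1 - (W 1 / c - (W n - W (n - 1)) / c)
        = (c * W 1 - W 1 + (W n - W (n - 1))) / c := by
      field_simp
      ring
    rw [hfe]
    exact this
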